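/- For any A_0, A_1 ∈ K and any sequence (α_i)_{i≥1} in K, there exists a unique trace t on TLhat_2(q) which is invariant under the Dynkin automorphism ψ_2 (i.e. t ∘ ψ_2 = t) and satisfies t(1) = A_0, t(f_{σ_1}) = A_1, and t((f_{σ_1}·f_{a_2})^i) = α_i for every i ≥ 1. -/

import Mathlib

namespace AffineTL

open FreeAlgebra

/-- Cyclic successor on `Fin m`. -/
def csucc {m : ℕ} (i : Fin m) : Fin m := ⟨(i.val + 1) % m, Nat.mod_lt _ i.pos⟩

/-- The defining relations of the affine Temperley–Lieb algebra `TLhat_m(q)` with `m`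
generators (indexed so that `g_{σ_i}` has index `i - 1` and `g_{a_m}` has index `m - 1`).
For `m = 1` the unique generator is set to `0`, so that `TLhat_1(q) ≅ K`. -/
inductive ATLRel {K : Type*} [CommRing K] (q : K) (m : ℕ) :
    FreeAlgebra K (Fin m) → FreeAlgebra K (Fin m) → Prop
  | degen (h : m ≤ 1) (i : Fin m) : ATLRel q m (ι K i) 0
  | quad (h : 2 ≤ m) (i : Fin m) :
      ATLRel q m (ι K i * ι K i) ((q - 1) • ι K i + algebraMap K _ q)
  | comm (h : 3 ≤ m) (i j : Fin m) (h1 : i ≠ j) (h2 : j ≠ csucc i) (h3 : i ≠ csucc j) :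
      ATLRel q m (ι K i * ι K j) (ι K j * ι K i)
  | braid (h : 3 ≤ m) (i : Fin m) :
      ATLRel q m (ι K i * ι K (csucc i) * ι K i) (ι K (csucc i) * ι K i * ι K (csucc i))
  | vrel (h : 3 ≤ m) (i : Fin m) :
      ATLRel q m (ι K i * ι K (csucc i) * ι K i + ι K i * ι K (csucc i) + ι K (csucc i) * ι K i
        + ι K i + ι K (csucc i) + 1) 0

/-- The affine Temperley–Lieb algebra `TLhat_m(q)` of type `Ã`. -/
abbrev ATL (K : Type*) [CommRing K] (q : K) (m : ℕ) : Type _ := RingQuot (ATLRel q m)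

/-- The generators of `TLhat_m(q)`. -/
noncomputable def g {K : Type*} [CommRing K] (q : K) (m : ℕ) (i : Fin m) : ATL K q m :=
  RingQuot.mkAlgHom K (ATLRel q m) (ι K i)

/-- The defining relations of the type `A` Temperley–Lieb algebra `TL_n(q)` with `n`
generators (`g_{σ_i}` has index `i - 1`). -/
inductive TLARel {K : Type*} [CommRing K] (q : K) (n : ℕ) :
    FreeAlgebra K (Fin n) → FreeAlgebra K (Fin n) → Prop
  | quad (i : Fin n) :
      TLARel q n (ι K i * ι K i) ((q - 1) • ι K i + algebraMap K _ q)
  | comm (i j : Fin n) (h : i.val + 2 ≤ j.val ∨ j.val + 2 ≤ i.val) :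
      TLARel q n (ι K i * ι K j) (ι K j * ι K i)
  | braid (i j : Fin n) (h : j.val = i.val + 1) :
      TLARel q n (ι K i * ι K j * ι K i) (ι K j * ι K i * ι K j)
  | vrel (i j : Fin n) (h : j.val = i.val + 1) :
      TLARel q n (ι K i * ι K j * ι K i + ι K i * ι K j + ι K j * ι K i
        + ι K i + ι K j + 1) 0

/-- The type `A` Temperley–Lieb algebra `TL_n(q)`. -/
abbrev TLA (K : Type*) [CommRing K] (q : K) (n : ℕ) : Type _ := RingQuot (TLARel q n)

/-- The generators of `TL_n(q)`. -/
noncomputable def gA {K : Type*} [CommRing K] (q : K) (n : ℕ) (i : Fin n) : TLA K q n :=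
  RingQuot.mkAlgHom K (TLARel q n) (ι K i)

/-- The formal inverse `q⁻¹·(x − (q−1))` of an element satisfying `x² = (q−1)x + q`. -/
noncomputable def qinv {K : Type*} [CommRing K] (q : K) {A : Type*} [Ring A] [Algebra K A]
    (x : A) : A :=
  Ring.inverse q • (x - algebraMap K A (q - 1))

/-- A trace on a `K`-algebra: a `K`-linear form vanishing on commutators. -/
def IsTrace {K : Type*} [CommRing K] {A : Type*} [Ring A] [Algebra K A]
    (τ : A →ₗ[K] K) : Prop :=
  ∀ x y : A, τ (x * y) = τ (y * x)

/-- The element `G = g_{σ_n}⋯g_{σ_1}·g_{a_{n+1}}` of `TLhat_{n+1}(q)`. -/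
noncomputable def bigG {K : Type*} [CommRing K] (q : K) (n : ℕ) : ATL K q (n + 1) :=
  (List.ofFn fun j : Fin n => g q (n + 1) ⟨n - 1 - j.val, by omega⟩).prod *
    g q (n + 1) (Fin.last n)

/-- The inverse `G⁻¹ = g_{a_{n+1}}⁻¹·g_{σ_1}⁻¹⋯g_{σ_n}⁻¹` of `bigG`. -/
noncomputable def bigGinv {K : Type*} [CommRing K] (q : K) (n : ℕ) : ATL K q (n + 1) :=
  qinv q (g q (n + 1) (Fin.last n)) *
    (List.ofFn fun j : Fin n => qinv q (g q (n + 1) j.castSucc)).prod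

end AffineTL

namespace S4

/-- Last letter of the alternating word with first letter `s` and length `l+1`. -/
def lastB (s : Bool) (l : ℕ) : Bool := xor s (decide (l % 2 = 1))

/-- The monoid of alternating words in two idempotent letters: `one` is the empty word,
`w s l` is the alternating word starting with `s` of length `l+1`. -/
inductive W : Type
  | one : W
  | w (s : Bool) (l : ℕ) : W
  deriving DecidableEq

instance : One W := ⟨W.one⟩

instance : Mul W :=
  ⟨fun a b =>
    match a, b with
    | .one, b => b
    | a, .one => a
    | .w s l, .w t m => if lastB s l = t then .w s (l + m) else .w s (l + m + 1)⟩

lemma w_mul_w (s : Bool) (l : ℕ) (t : Bool) (m : ℕ) :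
    W.w s l * W.w t m = if lastB s l = t then W.w s (l + m) else W.w s (l + m + 1) := rfl

lemma one_mul'' (a : W) : W.one * a = a := by cases a <;> rfl
lemma mul_one'' (a : W) : a * W.one = a := by cases a <;> rfl
lemma one_mul' (a : W) : 1 * a = a := one_mul'' a
lemma mul_one' (a : W) : a * 1 = a := mul_one'' a

lemma lastB_add (s : Bool) (l : ℕ) (t : Bool) (m : ℕ) :
    lastB s (l + m + if lastB s l = t then 0 else 1) = lastB t m := by
  have hl := Nat.mod_two_eq_zero_or_one l
  have hm := Nat.mod_two_eq_zero_or_one m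
  cases s <;> cases t <;> rcases hl with hl | hl <;> rcases hm with hm | hm <;>
    simp [lastB, hl, hm, Nat.add_mod]

lemma mul_assoc' (a b c : W) : a * b * c = a * (b * c) := by
  rcases a with _ | ⟨s, l⟩
  · rw [one_mul'', one_mul'']
  rcases b with _ | ⟨t, m⟩
  · rw [mul_one'', one_mul'']
  rcases c with _ | ⟨u, n⟩
  · rw [mul_one'', mul_one'']
  have key := lastB_add s l t m
  by_cases h1 : lastB s l = t <;> by_cases h2 : lastB t m = u
  · rw [if_pos h1, Nat.add_zero] at key
    rw [w_mul_w s l t m, if_pos h1, w_mul_w t m u n, if_pos h2, w_mul_w, w_mul_w, if_pos h1]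
    rw [if_pos (key.trans h2)]
    congr 1
    omega
  · rw [if_pos h1, Nat.add_zero] at key
    rw [w_mul_w s l t m, if_pos h1, w_mul_w t m u n, if_neg h2, w_mul_w, w_mul_w, if_pos h1]
    have h3 : ¬ lastB s (l + m) = u := by rw [key]; exact h2
    rw [if_neg h3]
    congr 1
    omega
  · rw [if_neg h1] at key
    rw [w_mul_w s l t m, if_neg h1, w_mul_w t m u n, if_pos h2, w_mul_w, w_mul_w, if_neg h1]
    rw [if_pos (key.trans h2)]
    congr 1
    omega
  · rw [if_neg h1] at key
    rw [w_mul_w s l t m, if_neg h1, w_mul_w t m u n, if_neg h2, w_mul_w, w_mul_w, if_neg h1]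
    have h3 : ¬ lastB s (l + m + 1) = u := by rw [key]; exact h2
    rw [if_neg h3]
    congr 1
    omega

instance : Monoid W where
  one_mul := one_mul'
  mul_one := mul_one'
  mul_assoc := mul_assoc'


open AffineTL

/-- Trace values by reduced length. -/
def vlen {K : Type*} (A1 : K) (α : ℕ → K) (n : ℕ) : K := if n = 0 then A1 else α ((n + 1) / 2)

/-- Trace values on the monoid `W`. -/
def v {K : Type*} (A0 A1 : K) (α : ℕ → K) : W → K
  | .one => A0
  | .w _ l => vlen A1 α l

lemma vlen_odd {K : Type*} (A1 : K) (α : ℕ → K) {k : ℕ} (hk : k % 2 = 1) :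
    vlen A1 α k = vlen A1 α (k + 1) := by
  rw [vlen, vlen, if_neg (by omega), if_neg (by omega)]
  congr 1
  omega

lemma vlen_key {K : Type*} (A1 : K) (α : ℕ → K) (a : Bool) (m : ℕ) (b : Bool) (n : ℕ) :
    vlen A1 α (m + n + if lastB a m = b then 0 else 1) =
      vlen A1 α (n + m + if lastB b n = a then 0 else 1) := by
  by_cases h1 : lastB a m = b <;> by_cases h2 : lastB b n = a
  · rw [if_pos h1, if_pos h2, Nat.add_comm m n]
  · have hpar : (m + n) % 2 = 1 := by
      cases a <;> cases b <;> simp [lastB] at h1 h2 <;> omega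
    rw [if_pos h1, if_neg h2, Nat.add_zero, vlen_odd A1 α hpar]
    congr 1
    omega
  · have hpar : (m + n) % 2 = 1 := by
      cases a <;> cases b <;> simp [lastB] at h1 h2 <;> omega
    rw [if_neg h1, if_pos h2, Nat.add_zero (n + m), vlen_odd A1 α (by omega : (n + m) % 2 = 1)]
    congr 1
    omega
  · rw [if_neg h1, if_neg h2]
    congr 1
    omega

lemma lastB_not (s : Bool) (l : ℕ) : lastB (!s) l = lastB s (l + 1) := by
  have hl := Nat.mod_two_eq_zero_or_one l
  cases s <;> rcases hl with hl | hl <;> simp [lastB, hl, Nat.add_mod]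

/-- The idempotent `f_b` in the monoid algebra of `W`. -/
noncomputable def Ffun (K : Type*) [CommRing K] (b : Bool) : MonoidAlgebra K W :=
  MonoidAlgebra.single (W.w b 0) 1

/-- The image of the generator `g_b` in the monoid algebra of `W`. -/
noncomputable def Gfun (K : Type*) [CommRing K] (q : K) (b : Bool) : MonoidAlgebra K W :=
  (q + 1) • Ffun K b - 1

lemma Ffun_mul_self (K : Type*) [CommRing K] (b : Bool) : Ffun K b * Ffun K b = Ffun K b := by
  rw [Ffun, MonoidAlgebra.single_mul_single, w_mul_w, one_mul]
  simp [lastB]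

lemma Gfun_quad (K : Type*) [CommRing K] (q : K) (b : Bool) :
    Gfun K q b * Gfun K q b = (q - 1) • Gfun K q b + algebraMap K (MonoidAlgebra K W) q := by
  rw [Gfun, Algebra.algebraMap_eq_smul_one]
  rw [sub_mul, mul_sub, mul_sub, mul_one, one_mul, smul_mul_smul_comm, Ffun_mul_self]
  rw [one_mul]
  module

/-- The idempotent `f` attached to a generator of `TLhat_2(q)`. -/
noncomputable def Eb {K : Type*} [CommRing K] (q : K) (b : Bool) : ATL K q 2 :=
  Ring.inverse (q + 1) • (g q 2 (bif b then 1 else 0) + 1)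

/-- `P q s n` is the alternating product of idempotents starting with `E s`, length `n+1`. -/
noncomputable def P {K : Type*} [CommRing K] (q : K) : Bool → ℕ → ATL K q 2
  | s, 0 => Eb q s
  | s, n + 1 => Eb q s * P q (!s) n

lemma P_succ {K : Type*} [CommRing K] (q : K) (s : Bool) (n : ℕ) :
    P q s (n + 1) = Eb q s * P q (!s) n := rfl

lemma g_quad {K : Type*} [CommRing K] (q : K) (i : Fin 2) :
    g q 2 i * g q 2 i = (q - 1) • g q 2 i + algebraMap K (ATL K q 2) q := by
  rw [g, ← map_mul, RingQuot.mkAlgHom_rel K (ATLRel.quad (le_refl 2) i), map_add,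
    map_smul, AlgHom.commutes]

lemma g_one_quad {K : Type*} [CommRing K] (q : K) (i : Fin 2) :
    (g q 2 i + 1) * (g q 2 i + 1) = (q + 1) • (g q 2 i + 1) := by
  rw [add_mul, mul_add, mul_add, mul_one, one_mul, g_quad, Algebra.algebraMap_eq_smul_one]
  rw [one_mul]
  module

lemma Eb_mul_self {K : Type*} [CommRing K] (q : K) (hq1 : IsUnit (q + 1)) (b : Bool) :
    Eb q b * Eb q b = Eb q b := by
  rw [Eb, smul_mul_smul_comm, g_one_quad, smul_smul, mul_assoc,
    Ring.inverse_mul_cancel _ hq1, mul_one]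

lemma smul_Eb {K : Type*} [CommRing K] (q : K) (hq1 : IsUnit (q + 1)) (b : Bool) :
    (q + 1) • Eb q b = g q 2 (bif b then 1 else 0) + 1 := by
  rw [Eb, smul_smul, Ring.mul_inverse_cancel _ hq1, one_smul]

lemma g_eq_Eb {K : Type*} [CommRing K] (q : K) (hq1 : IsUnit (q + 1)) (b : Bool) :
    g q 2 (bif b then 1 else 0) = (q + 1) • Eb q b - 1 := by
  rw [smul_Eb q hq1, add_sub_cancel_right]

lemma Eb_mul_P {K : Type*} [CommRing K] (q : K) (hq1 : IsUnit (q + 1)) (s : Bool) (n : ℕ) :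
    Eb q s * P q s n = P q s n := by
  cases n with
  | zero => exact Eb_mul_self q hq1 s
  | succ n => rw [P_succ, ← mul_assoc, Eb_mul_self q hq1 s]

lemma P_mul_P {K : Type*} [CommRing K] (q : K) (hq1 : IsUnit (q + 1)) :
    ∀ (m : ℕ) (a b : Bool) (n : ℕ),
      P q a m * P q b n = P q a (m + n + if lastB a m = b then 0 else 1) := by
  intro m
  induction m with
  | zero =>
    intro a b n
    have hl : lastB a 0 = a := by cases a <;> simp [lastB]
    by_cases h : a = b
    · subst h
      rw [if_pos hl]
      show Eb q a * P q a n = P q a (0 + n + 0)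
      rw [Eb_mul_P q hq1, Nat.zero_add, Nat.add_zero]
    · have hb : b = !a := by cases a <;> cases b <;> simp_all
      subst hb
      rw [if_neg (by rw [hl]; simp)]
      show Eb q a * P q (!a) n = P q a (0 + n + 1)
      rw [Nat.zero_add, ← P_succ]
  | succ m ih =>
    intro a b n
    rw [P_succ, mul_assoc, ih (!a) b n, ← P_succ, lastB_not]
    congr 1
    omega

/-- Alternating words of even length are powers. -/
lemma P_odd_pow {K : Type*} [CommRing K] (q : K) :
    ∀ (k : ℕ) (s : Bool), P q s (2 * k + 1) = (Eb q s * Eb q (!s)) ^ (k + 1) := by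
  intro k
  induction k with
  | zero => intro s; rw [pow_one]; rfl
  | succ k ih =>
    intro s
    have e : 2 * (k + 1) + 1 = (2 * k + 1) + 1 + 1 := by ring
    rw [e, P_succ, P_succ, Bool.not_not, ih s, ← mul_assoc, ← pow_succ']

lemma pow_mul_idem {A : Type*} [Monoid A] (a b : A) (hb : b * b = b) :
    ∀ k : ℕ, (a * b) ^ (k + 1) * b = (a * b) ^ (k + 1) := by
  intro k
  rw [pow_succ, mul_assoc, mul_assoc, hb]

end S4

open S4

open AffineTL in
/-- classification of `ψ₂`-invariant traces on `TLhat_2(q)`. -/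
theorem statement4 {K : Type*} [CommRing K] [IsDomain K] [CharZero K]
    (q sq : K) (hsq : sq * sq = q) (hq : IsUnit q) (hq1 : IsUnit (q + 1))
    (ψ : ATL K q 2 ≃ₐ[K] ATL K q 2)
    (hψ1 : ψ (g q 2 0) = g q 2 1) (hψ2 : ψ (g q 2 1) = g q 2 0)
    (A0 A1 : K) (α : ℕ → K) :
    ∃! t : ATL K q 2 →ₗ[K] K,
      IsTrace t ∧
      (∀ x : ATL K q 2, t (ψ x) = t x) ∧
      t 1 = A0 ∧
      t (Ring.inverse (q + 1) • (g q 2 0 + 1)) = A1 ∧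
      (∀ i : ℕ, 1 ≤ i →
        t (((Ring.inverse (q + 1) • (g q 2 0 + 1)) *
            (Ring.inverse (q + 1) • (g q 2 1 + 1))) ^ i) = α i) := by
  classical
  -- the algebra morphism to the monoid algebra model
  have hrel : ∀ ⦃x y : FreeAlgebra K (Fin 2)⦄, ATLRel q 2 x y →
      (FreeAlgebra.lift K fun i : Fin 2 => Gfun K q (decide (i = 1))) x =
      (FreeAlgebra.lift K fun i : Fin 2 => Gfun K q (decide (i = 1))) y := by
    intro x y h
    cases h with
    | degen h i => omega
    | quad h i =>
        simp only [map_mul, map_add, map_smul, AlgHom.commutes, FreeAlgebra.lift_ι_apply]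
        exact Gfun_quad K q _
    | comm h i j h1 h2 h3 => omega
    | braid h i => omega
    | vrel h i => omega
  set φ : ATL K q 2 →ₐ[K] MonoidAlgebra K W :=
    RingQuot.liftAlgHom K ⟨FreeAlgebra.lift K fun i : Fin 2 => Gfun K q (decide (i = 1)), hrel⟩
    with hφdef
  have hφg : ∀ i : Fin 2, φ (g q 2 i) = Gfun K q (decide (i = 1)) := by
    intro i
    rw [g, hφdef, RingQuot.liftAlgHom_mkAlgHom_apply, FreeAlgebra.lift_ι_apply]
  have hφE : ∀ b : Bool, φ (Eb q b) = Ffun K b := by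
    intro b
    rw [Eb, map_smul, map_add, map_one, hφg]
    have hb : (decide ((bif b then 1 else 0 : Fin 2) = 1)) = b := by cases b <;> decide
    rw [hb, Gfun, sub_add_cancel, smul_smul, Ring.inverse_mul_cancel _ hq1, one_smul]
  have hφP : ∀ (n : ℕ) (s : Bool), φ (P q s n) = MonoidAlgebra.single (W.w s n) 1 := by
    intro n
    induction n with
    | zero => intro s; exact hφE s
    | succ n ih =>
        intro s
        rw [P_succ, map_mul, hφE, ih, Ffun, MonoidAlgebra.single_mul_single, one_mul, w_mul_w]
        have h0 : lastB s 0 = s := by cases s <;> simp [lastB]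
        rw [h0, if_neg (by cases s <;> simp)]
        norm_num
  -- the trace functional on the monoid algebra
  set τ : MonoidAlgebra K W →ₗ[K] K := (Finsupp.linearCombination K (v A0 A1 α)).comp
    (MonoidAlgebra.coeffLinearEquiv K).toLinearMap with hτdef
  have hτs : ∀ (x : W) (c : K), τ (MonoidAlgebra.single x c) = c * v A0 A1 α x := by
    intro x c
    rw [hτdef]
    show Finsupp.linearCombination K (v A0 A1 α) (Finsupp.single x c) = c * v A0 A1 α x
    rw [Finsupp.linearCombination_single, smul_eq_mul]
  set t : ATL K q 2 →ₗ[K] K := τ.comp φ.toLinearMap with htdef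
  have ht : ∀ x, t x = τ (φ x) := fun x => rfl
  have tP : ∀ (n : ℕ) (s : Bool), t (P q s n) = vlen A1 α n := by
    intro n s
    rw [ht, hφP, hτs, one_mul]
    rfl
  have t1 : t 1 = A0 := by
    rw [ht, map_one, MonoidAlgebra.one_def, hτs, one_mul]
    rfl
  -- spanning
  have hmem1 : (1 : ATL K q 2) ∈
      ({1} ∪ Set.range fun p : Bool × ℕ => P q p.1 p.2 : Set (ATL K q 2)) := Or.inl rfl
  have hmemP : ∀ (s : Bool) (n : ℕ), P q s n ∈
      ({1} ∪ Set.range fun p : Bool × ℕ => P q p.1 p.2 : Set (ATL K q 2)) :=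
    fun s n => Or.inr ⟨(s, n), rfl⟩
  have hEmem : ∀ (b : Bool) (z : ATL K q 2),
      z ∈ Submodule.span K ({1} ∪ Set.range fun p : Bool × ℕ => P q p.1 p.2) →
      Eb q b * z ∈ Submodule.span K ({1} ∪ Set.range fun p : Bool × ℕ => P q p.1 p.2) := by
    intro b z hz
    induction hz using Submodule.span_induction with
    | mem x hx =>
        rcases hx with rfl | ⟨⟨s, n⟩, rfl⟩
        · rw [mul_one]
          exact Submodule.subset_span (hmemP b 0)
        · by_cases hbs : b = s
          · subst hbs
            rw [Eb_mul_P q hq1]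
            exact Submodule.subset_span (hmemP b n)
          · have hs : s = !b := by cases b <;> cases s <;> simp_all
            subst hs
            rw [← P_succ]
            exact Submodule.subset_span (hmemP b (n + 1))
    | zero =>
        rw [mul_zero]
        exact Submodule.zero_mem _
    | add x y hx hy ihx ihy =>
        rw [mul_add]
        exact Submodule.add_mem _ ihx ihy
    | smul a x hx ihx =>
        rw [mul_smul_comm]
        exact Submodule.smul_mem _ _ ihx
  have hspan : Submodule.span K
      ({1} ∪ Set.range fun p : Bool × ℕ => P q p.1 p.2 : Set (ATL K q 2)) = ⊤ := by
    rw [Submodule.eq_top_iff']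
    intro x
    obtain ⟨y, rfl⟩ := RingQuot.mkAlgHom_surjective K (ATLRel q 2) x
    have key : ∀ y : FreeAlgebra K (Fin 2), ∀ z ∈ Submodule.span K
        ({1} ∪ Set.range fun p : Bool × ℕ => P q p.1 p.2 : Set (ATL K q 2)),
        RingQuot.mkAlgHom K (ATLRel q 2) y * z ∈ Submodule.span K
        ({1} ∪ Set.range fun p : Bool × ℕ => P q p.1 p.2 : Set (ATL K q 2)) := by
      intro y
      refine FreeAlgebra.induction K (Fin 2) ?_ ?_ ?_ ?_ y
      · intro r z hz
        rw [AlgHom.commutes, ← Algebra.smul_def]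
        exact Submodule.smul_mem _ _ hz
      · intro i z hz
        have hex : ∃ b : Bool, (bif b then 1 else 0 : Fin 2) = i := by
          fin_cases i
          · exact ⟨false, by decide⟩
          · exact ⟨true, by decide⟩
        obtain ⟨b, rfl⟩ := hex
        have hgi : RingQuot.mkAlgHom K (ATLRel q 2) (FreeAlgebra.ι K (bif b then 1 else 0)) =
            g q 2 (bif b then 1 else 0) := rfl
        rw [hgi, g_eq_Eb q hq1 b, sub_mul, one_mul, smul_mul_assoc]
        exact Submodule.sub_mem _ (Submodule.smul_mem _ _ (hEmem b z hz)) hz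
      · intro y1 y2 ih1 ih2 z hz
        rw [map_mul, mul_assoc]
        exact ih1 _ (ih2 _ hz)
      · intro y1 y2 ih1 ih2 z hz
        rw [map_add, add_mul]
        exact Submodule.add_mem _ (ih1 _ hz) (ih2 _ hz)
    have := key y 1 (Submodule.subset_span hmem1)
    simpa using this
  -- the Dynkin automorphism on the idempotents
  have hψE : ∀ b : Bool, ψ (Eb q b) = Eb q (!b) := by
    intro b
    cases b
    · rw [Eb, Eb, map_smul, map_add, map_one]
      show _ • (ψ (g q 2 0) + 1) = _ • (g q 2 1 + 1)
      rw [hψ1]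
    · rw [Eb, Eb, map_smul, map_add, map_one]
      show _ • (ψ (g q 2 1) + 1) = _ • (g q 2 0 + 1)
      rw [hψ2]
  have hψP : ∀ (n : ℕ) (s : Bool), ψ (P q s n) = P q (!s) n := by
    intro n
    induction n with
    | zero => intro s; exact hψE s
    | succ n ih =>
        intro s
        rw [P_succ, map_mul, hψE, ih, P_succ, Bool.not_not]
  -- properties of t
  have htrace : IsTrace t := by
    intro x y
    have hx : x ∈ Submodule.span K
        ({1} ∪ Set.range fun p : Bool × ℕ => P q p.1 p.2 : Set (ATL K q 2)) := by
      rw [hspan]; exact Submodule.mem_top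
    have hy : y ∈ Submodule.span K
        ({1} ∪ Set.range fun p : Bool × ℕ => P q p.1 p.2 : Set (ATL K q 2)) := by
      rw [hspan]; exact Submodule.mem_top
    induction hx using Submodule.span_induction with
    | mem x1 hx1 =>
        induction hy using Submodule.span_induction with
        | mem y1 hy1 =>
            rcases hx1 with rfl | ⟨⟨a, m⟩, rfl⟩
            · rw [one_mul, mul_one]
            rcases hy1 with rfl | ⟨⟨b, n⟩, rfl⟩
            · rw [one_mul, mul_one]
            rw [P_mul_P q hq1, P_mul_P q hq1, tP, tP]
            exact vlen_key A1 α a m b n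
        | zero => rw [mul_zero, zero_mul]
        | add y1 y2 h1 h2 ih1 ih2 => rw [mul_add, add_mul, map_add, map_add, ih1, ih2]
        | smul a y1 h1 ih1 => rw [mul_smul_comm, smul_mul_assoc, map_smul, map_smul, ih1]
    | zero => rw [mul_zero, zero_mul]
    | add x1 x2 h1 h2 ih1 ih2 => rw [mul_add, add_mul, map_add, map_add, ih1, ih2]
    | smul a x1 h1 ih1 => rw [mul_smul_comm, smul_mul_assoc, map_smul, map_smul, ih1]
  have hinv : ∀ x, t (ψ x) = t x := by
    intro x
    have hx : x ∈ Submodule.span K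
        ({1} ∪ Set.range fun p : Bool × ℕ => P q p.1 p.2 : Set (ATL K q 2)) := by
      rw [hspan]; exact Submodule.mem_top
    induction hx using Submodule.span_induction with
    | mem x1 hx1 =>
        rcases hx1 with rfl | ⟨⟨s, n⟩, rfl⟩
        · rw [map_one]
        · rw [hψP, tP, tP]
    | zero => rw [map_zero, map_zero]
    | add x1 x2 h1 h2 ih1 ih2 => rw [map_add, map_add, map_add, ih1, ih2]
    | smul a x1 h1 ih1 => rw [map_smul, map_smul, map_smul, ih1]
  have tA1 : t (Ring.inverse (q + 1) • (g q 2 0 + 1)) = A1 := by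
    have h := tP 0 false
    have hv : vlen A1 α 0 = A1 := by rw [vlen, if_pos rfl]
    rw [hv] at h
    exact h
  have tα : ∀ i : ℕ, 1 ≤ i →
      t (((Ring.inverse (q + 1) • (g q 2 0 + 1)) *
          (Ring.inverse (q + 1) • (g q 2 1 + 1))) ^ i) = α i := by
    intro i hi
    obtain ⟨k, rfl⟩ : ∃ k, i = k + 1 := ⟨i - 1, by omega⟩
    have h := tP (2 * k + 1) false
    rw [P_odd_pow] at h
    simp only [Bool.not_false] at h
    have hv : vlen A1 α (2 * k + 1) = α (k + 1) := by
      rw [vlen, if_neg (by omega)]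
      congr 1
      omega
    rw [hv] at h
    exact h
  -- value of any invariant trace on the spanning set
  have hval : ∀ T : ATL K q 2 →ₗ[K] K, IsTrace T → (∀ x, T (ψ x) = T x) →
      T (Ring.inverse (q + 1) • (g q 2 0 + 1)) = A1 →
      (∀ i : ℕ, 1 ≤ i → T (((Ring.inverse (q + 1) • (g q 2 0 + 1)) *
            (Ring.inverse (q + 1) • (g q 2 1 + 1))) ^ i) = α i) →
      ∀ (n : ℕ) (s : Bool), T (P q s n) = vlen A1 α n := by
    intro T hTr hInv hA1' hα'
    have hE0 : Eb q false = Ring.inverse (q + 1) • (g q 2 0 + 1) := rfl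
    have hE1 : Eb q true = Ring.inverse (q + 1) • (g q 2 1 + 1) := rfl
    have hfalse : ∀ n : ℕ, T (P q false n) = vlen A1 α n := by
      intro n
      match n with
      | 0 =>
        have hv : vlen A1 α 0 = A1 := by rw [vlen, if_pos rfl]
        rw [hv]
        exact hA1'
      | (n + 1) =>
        rcases Nat.even_or_odd n with ⟨k, hk⟩ | ⟨k, hk⟩
        · have e : n + 1 = 2 * k + 1 := by omega
          rw [e, P_odd_pow]
          simp only [Bool.not_false]
          have hv : vlen A1 α (2 * k + 1) = α (k + 1) := by
            rw [vlen, if_neg (by omega)]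
            congr 1
            omega
          rw [hv, hE0, hE1]
          exact hα' (k + 1) (by omega)
        · have e : n + 1 = 2 * k + 1 + 1 := by omega
          rw [e, P_succ]
          simp only [Bool.not_false]
          rw [P_odd_pow]
          simp only [Bool.not_true]
          rw [hTr, pow_mul_idem (Eb q true) (Eb q false) (Eb_mul_self q hq1 false) k]
          have hψpow : ψ ((Eb q false * Eb q true) ^ (k + 1)) =
              (Eb q true * Eb q false) ^ (k + 1) := by
            rw [map_pow, map_mul, hψE, hψE]
            simp only [Bool.not_false, Bool.not_true]
          rw [← hψpow, hInv]
          have hv : vlen A1 α (2 * k + 1 + 1) = α (k + 1) := by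
            rw [vlen, if_neg (by omega)]
            congr 1
            omega
          rw [hv, hE0, hE1]
          exact hα' (k + 1) (by omega)
    intro n s
    cases s
    · exact hfalse n
    · have hh := hψP n false
      simp only [Bool.not_false] at hh
      rw [← hh, hInv]
      exact hfalse n
  -- conclusion
  refine ⟨t, ⟨htrace, hinv, t1, tA1, tα⟩, ?_⟩
  rintro t' ⟨htr', hinv', h1', hA1'', hα''⟩
  apply LinearMap.ext_on hspan
  rintro x (rfl | ⟨⟨s, n⟩, rfl⟩)
  · rw [h1', t1]
  · rw [hval t' htr' hinv' hA1'' hα'' n s, hval t htrace hinv tA1 tα n s]
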